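/- Let A_ρ ⊆ M_n be a structural matrix algebra and let φ : A_ρ → M_n be a continuous map which preserves commutativity and spectrum. Then for each matrix S that is invertible with S, S⁻¹ ∈ A_ρ, there exists an invertible matrix T ∈ M_n such that φ(S D S⁻¹) = T D T⁻¹ for every diagonal matrix D ∈ M_n. -/

import Mathlib

open Matrix Polynomial Finset

section Stmt14Helpers

variable {n : ℕ}

private lemma stmt14_commute_aeval {B M : Matrix (Fin n) (Fin n) ℂ} (h : Commute B M) (p : ℂ[X]) :
    Commute B (Polynomial.aeval M p) := by
  induction p using Polynomial.induction_on' with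
  | add p q hp hq => simpa [map_add] using hp.add_right hq
  | monomial k c =>
      rw [Polynomial.aeval_monomial]
      exact (Algebra.commute_algebraMap_right c B).mul_right (h.pow_right k)

private lemma stmt14_charpoly_eval_eq_zero_iff (M : Matrix (Fin n) (Fin n) ℂ) (μ : ℂ) :
    μ ∈ spectrum ℂ M ↔ M.charpoly.eval μ = 0 := by
  have hdet : M.charpoly.eval μ = (algebraMap ℂ (Matrix (Fin n) (Fin n) ℂ) μ - M).det := by
    rw [Matrix.charpoly, _root_.eval_det, Matrix.matPolyEquiv_charmatrix]
    simp only [eval_sub, eval_X, eval_C, Matrix.algebraMap_eq_diagonal]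
    rfl
  rw [spectrum.mem_iff, Matrix.isUnit_iff_isUnit_det, isUnit_iff_ne_zero, not_ne_iff, hdet]

private lemma stmt14_charpoly_eq_nodal (M : Matrix (Fin n) (Fin n) ℂ) (d : Fin n → ℂ)
    (hd : Function.Injective d) (hs : spectrum ℂ M = Set.range d) :
    M.charpoly = Lagrange.nodal Finset.univ d := by
  have hne : (M.charpoly) ≠ 0 := M.charpoly_monic.ne_zero
  have hdeg : M.charpoly.natDegree = n := by
    simp [M.charpoly_natDegree_eq_dim]
  have hcard : Multiset.card M.charpoly.roots = n := by
    conv_rhs => rw [← hdeg]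
    exact IsAlgClosed.card_roots_eq_natDegree
  have hmemroots : ∀ μ : ℂ, μ ∈ M.charpoly.roots ↔ μ ∈ Set.range d := by
    intro μ
    rw [Polynomial.mem_roots', ← hs]
    constructor
    · rintro ⟨-, h⟩
      exact (stmt14_charpoly_eval_eq_zero_iff M μ).mpr h
    · intro h
      exact ⟨hne, (stmt14_charpoly_eval_eq_zero_iff M μ).mp h⟩
  have htf : M.charpoly.roots.toFinset = Finset.univ.image d := by
    ext μ
    rw [Multiset.mem_toFinset, hmemroots μ]
    simp [eq_comm]
  have hnodup : M.charpoly.roots.Nodup := by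
    rw [← Multiset.toFinset_card_eq_card_iff_nodup, htf, hcard,
      Finset.card_image_of_injective _ hd, Finset.card_univ, Fintype.card_fin]
  have hroots_eq : M.charpoly.roots = (Finset.univ.image d).val := by
    rw [← htf, Multiset.toFinset_val, Multiset.dedup_eq_self.mpr hnodup]
  calc M.charpoly = (M.charpoly.roots.map fun a => X - C a).prod :=
        (prod_multiset_X_sub_C_of_monic_of_roots_card_eq M.charpoly_monic
          (by rw [hcard, hdeg])).symm
    _ = ∏ μ ∈ Finset.univ.image d, (X - C μ) := by
        rw [hroots_eq, Finset.prod_eq_multiset_prod]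
    _ = ∏ i, (X - C (d i)) := Finset.prod_image (fun a _ b _ h => hd h)
    _ = Lagrange.nodal Finset.univ d := (Lagrange.nodal_eq _ _).symm

private lemma stmt14_basis_eq (v : Fin n → ℂ) (i : Fin n) :
    Lagrange.basis Finset.univ v i =
      C (Lagrange.nodalWeight Finset.univ v i) * Lagrange.nodal (Finset.univ.erase i) v := by
  rw [Lagrange.basis_eq_prod_sub_inv_mul_nodal_div (mem_univ i),
    ← Lagrange.nodal_erase_eq_nodal_div (mem_univ i)]

private lemma stmt14_nodal_dvd_mul_basis (v : Fin n → ℂ) {i j : Fin n} (hij : i ≠ j) :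
    Lagrange.nodal Finset.univ v ∣
      Lagrange.basis Finset.univ v i * Lagrange.basis Finset.univ v j := by
  rw [stmt14_basis_eq v i, stmt14_basis_eq v j, mul_mul_mul_comm]
  apply Dvd.dvd.mul_left
  rw [Lagrange.nodal_eq_mul_nodal_erase (mem_univ j)]
  exact mul_dvd_mul (Lagrange.X_sub_C_dvd_nodal v (Finset.mem_erase.mpr ⟨hij.symm, mem_univ j⟩))
    dvd_rfl

private lemma stmt14_nodal_dvd_X_sub_C_mul_basis (v : Fin n → ℂ) (i : Fin n) :
    Lagrange.nodal Finset.univ v ∣ (X - C (v i)) * Lagrange.basis Finset.univ v i := by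
  rw [stmt14_basis_eq v i, mul_left_comm, ← Lagrange.nodal_eq_mul_nodal_erase (mem_univ i)]
  exact Dvd.dvd.mul_left dvd_rfl _

private lemma stmt14_bad_countable {d0 e : Fin n → ℂ} (hd0 : Function.Injective d0) :
    {t : ℂ | ¬ Function.Injective (fun k => d0 k + t * (e k - d0 k))}.Countable := by
  set p : ℂ → (Fin n → ℂ) := fun t k => d0 k + t * (e k - d0 k) with hp
  have hBadsub : {t : ℂ | ¬ Function.Injective (p t)} ⊆ ⋃ (q : Fin n × Fin n) (_ : q.1 ≠ q.2),
      {t : ℂ | p t q.1 = p t q.2} := by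
    intro t ht
    simp only [Set.mem_setOf_eq, Function.Injective] at ht
    push_neg at ht
    obtain ⟨a, b, hab, hne⟩ := ht
    exact Set.mem_iUnion₂.mpr ⟨(a, b), hne, hab⟩
  refine Set.Countable.mono hBadsub (Set.Countable.biUnion (Set.to_countable _) ?_)
  rintro ⟨a, b⟩ hab
  apply Set.Subsingleton.countable
  intro t1 ht1 t2 ht2
  simp only [Set.mem_setOf_eq, hp] at ht1 ht2
  by_contra hne
  have hβ : (e a - e b) - (d0 a - d0 b) = 0 := by
    have h3 : (t1 - t2) * ((e a - e b) - (d0 a - d0 b)) = 0 := by linear_combination ht1 - ht2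
    rcases mul_eq_zero.mp h3 with h | h
    · exact absurd (sub_eq_zero.mp h) hne
    · exact h
  have : d0 a - d0 b = 0 := by linear_combination ht1 - t1 * hβ
  exact hab (hd0 (sub_eq_zero.mp this))

private lemma stmt14_key_id {f : (Fin n → ℂ) → (Fin n → ℂ)} (hc : Continuous f)
    (hr : ∀ e, Set.range (f e) = Set.range e)
    {d0 : Fin n → ℂ} (hd0 : Function.Injective d0) (hf0 : f d0 = d0) :
    ∀ e, f e = e := by
  have hinj_case : ∀ e : Fin n → ℂ, Function.Injective e → f e = e := by
    intro e he
    set p : ℂ → (Fin n → ℂ) := fun t k => d0 k + t * (e k - d0 k) with hp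
    have hpcont : Continuous p := by
      apply continuous_pi
      intro k
      fun_prop
    set Bad : Set ℂ := {t : ℂ | ¬ Function.Injective (p t)} with hBad
    have hcount : Bad.Countable := stmt14_bad_countable hd0
    have hGconn : IsPreconnected Badᶜ := by
      refine (hcount.isPathConnected_compl_of_one_lt_rank ?_).isConnected.isPreconnected
      rw [Complex.rank_real_complex]
      exact Cardinal.one_lt_two
    have hinj : ∀ t ∉ Bad, Function.Injective (p t) := fun t ht => not_not.mp ht
    have hp0 : p 0 = d0 := by funext k; simp [hp]
    have hp1 : p 1 = e := by funext k; simp [hp]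
    have main : ∀ i : Fin n, Badᶜ ⊆ {t : ℂ | f (p t) i = p t i} := by
      intro i
      set C : Fin n → Set ℂ := fun k => {t : ℂ | f (p t) i = p t k} with hC
      have hCclosed : ∀ k, IsClosed (C k) := by
        intro k
        apply isClosed_eq
        · exact ((continuous_apply i).comp (hc.comp hpcont))
        · exact (continuous_apply k).comp hpcont
      have hcover : Badᶜ ⊆ C i ∪ ⋃ (k : Fin n) (_ : k ≠ i), C k := by
        intro t ht
        have hmem : f (p t) i ∈ Set.range (f (p t)) := Set.mem_range_self i
        rw [hr (p t)] at hmem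
        obtain ⟨k, hk⟩ := hmem
        by_cases hki : k = i
        · left; rw [hC]; simp only [Set.mem_setOf_eq, ← hk, hki]
        · right; exact Set.mem_iUnion₂.mpr ⟨k, hki, hk.symm⟩
      have h0mem : (0 : ℂ) ∈ Badᶜ ∩ C i := by
        constructor
        · simp only [Set.mem_compl_iff, hBad, Set.mem_setOf_eq, not_not, hp0]
          exact hd0
        · simp only [hC, Set.mem_setOf_eq, hp0, hf0]
      by_cases h2 : (Badᶜ ∩ ⋃ (k : Fin n) (_ : k ≠ i), C k).Nonempty
      · exfalso
        have hclosed2 : IsClosed (⋃ (k : Fin n) (_ : k ≠ i), C k) := by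
          apply isClosed_iUnion_of_finite
          intro k
          exact isClosed_iUnion_of_finite fun _ => hCclosed k
        obtain ⟨t, htG, hti, htk⟩ := isPreconnected_closed_iff.mp hGconn (C i)
          (⋃ (k : Fin n) (_ : k ≠ i), C k) (hCclosed i) hclosed2 hcover ⟨0, h0mem⟩ h2
        obtain ⟨k, hki, hkt⟩ := Set.mem_iUnion₂.mp htk
        exact hki (hinj t htG (hti.symm.trans hkt)).symm
      · intro t ht
        rcases hcover ht with h | h
        · exact h
        · exact absurd ⟨t, ht, h⟩ h2
    have h1G : (1 : ℂ) ∈ Badᶜ := by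
      simp only [Set.mem_compl_iff, hBad, Set.mem_setOf_eq, not_not, hp1]
      exact he
    funext i
    have := main i h1G
    simp only [Set.mem_setOf_eq, hp1] at this
    exact this
  have hdense : Dense {e : Fin n → ℂ | Function.Injective e} := by
    intro x
    set p : ℂ → (Fin n → ℂ) := fun t k => d0 k + t * (x k - d0 k) with hp
    have hpcont : Continuous p := by
      apply continuous_pi
      intro k
      fun_prop
    have hcount := stmt14_bad_countable (e := x) hd0
    have hdense' : Dense {t : ℂ | ¬ Function.Injective (p t)}ᶜ := hcount.dense_compl ℂ
    have hx : x ∈ p '' closure {t : ℂ | ¬ Function.Injective (p t)}ᶜ :=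
      ⟨1, hdense' 1, by funext k; simp [hp]⟩
    have hsub : p '' {t : ℂ | ¬ Function.Injective (p t)}ᶜ ⊆
        {e : Fin n → ℂ | Function.Injective e} := by
      rintro y ⟨t, ht, rfl⟩
      exact not_not.mp ht
    exact closure_mono hsub (image_closure_subset_closure_image hpcont hx)
  have := Continuous.ext_on hdense hc continuous_id (fun x hx => hinj_case x hx)
  intro e
  exact congrFun this e

private lemma stmt14_eq_diagonal_of_commute_single {B : Matrix (Fin n) (Fin n) ℂ}
    (h : ∀ i : Fin n, B * diagonal (Pi.single i 1) = diagonal (Pi.single i 1) * B) :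
    B = diagonal (fun i => B i i) := by
  ext i j
  by_cases hij : i = j
  · subst hij; simp
  · have h2 : (B * (diagonal (Pi.single j 1) : Matrix (Fin n) (Fin n) ℂ)) i j
        = ((diagonal (Pi.single j 1) : Matrix (Fin n) (Fin n) ℂ) * B) i j := by
      rw [h j]
    rw [Matrix.mul_diagonal, Matrix.diagonal_mul, Pi.single_eq_same,
      Pi.single_eq_of_ne hij, zero_mul, mul_one] at h2
    rw [Matrix.diagonal_apply_ne _ hij, h2]

private lemma stmt14_sum_smul_single_diagonal (d : Fin n → ℂ) :
    ∑ i, d i • (diagonal (Pi.single i 1) : Matrix (Fin n) (Fin n) ℂ) = diagonal d := by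
  ext a b
  rw [Matrix.sum_apply]
  by_cases hab : a = b
  · subst hab
    rw [Matrix.diagonal_apply_eq]
    rw [Finset.sum_eq_single a]
    · simp
    · intro i _ hia
      simp [Matrix.diagonal_apply, Pi.single_eq_of_ne (Ne.symm hia)]
    · simp
  · rw [Matrix.diagonal_apply_ne _ hab]
    apply Finset.sum_eq_zero
    intro i _
    simp [Matrix.diagonal_apply_ne _ hab]

end Stmt14Helpers

theorem stmt_14 (n : ℕ) (ρ : Fin n → Fin n → Prop)
    (hrefl : ∀ i, ρ i i) (htrans : ∀ i j k, ρ i j → ρ j k → ρ i k)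
    (A : Set (Matrix (Fin n) (Fin n) ℂ))
    (hA : A = {X : Matrix (Fin n) (Fin n) ℂ | ∀ i j, ¬ ρ i j → X i j = 0})
    (φ : Matrix (Fin n) (Fin n) ℂ → Matrix (Fin n) (Fin n) ℂ)
    (hcont : ContinuousOn φ A)
    (hcomm : ∀ X ∈ A, ∀ Y ∈ A, X * Y = Y * X → φ X * φ Y = φ Y * φ X)
    (hspec : ∀ X ∈ A, spectrum ℂ (φ X) = spectrum ℂ X) :
    ∀ S : Matrix (Fin n) (Fin n) ℂ, S ∈ A → S⁻¹ ∈ A → IsUnit S →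
      ∃ T : Matrix (Fin n) (Fin n) ℂ, IsUnit T ∧
        ∀ d : Fin n → ℂ,
          φ (S * Matrix.diagonal d * S⁻¹) = T * Matrix.diagonal d * T⁻¹ := by
  intro S hS hSinv hSu
  rcases Nat.eq_zero_or_pos n with hn | hn
  · subst hn
    refine ⟨1, isUnit_one, fun d => ?_⟩
    ext i j
    exact i.elim0
  haveI : NeZero n := ⟨hn.ne'⟩
  -- A is closed under multiplication and contains diagonals
  have hmulA : ∀ X ∈ A, ∀ Y ∈ A, X * Y ∈ A := by
    rw [hA]
    intro X hX Y hY i j hij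
    rw [Matrix.mul_apply]
    apply Finset.sum_eq_zero
    intro k _
    by_cases h1 : ρ i k
    · rw [hY k j (fun h2 => hij (htrans i k j h1 h2)), mul_zero]
    · rw [hX i k h1, zero_mul]
  have hdiagA : ∀ d : Fin n → ℂ, diagonal d ∈ A := by
    rw [hA]
    intro d i j hij
    exact Matrix.diagonal_apply_ne d (fun h => hij (h ▸ hrefl i))
  have hdet : IsUnit S.det := (Matrix.isUnit_iff_isUnit_det S).mp hSu
  have hS1 : S * S⁻¹ = 1 := Matrix.mul_nonsing_inv S hdet
  have hS2 : S⁻¹ * S = 1 := Matrix.nonsing_inv_mul S hdet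
  have hconjmulS : ∀ E F : Matrix (Fin n) (Fin n) ℂ,
      (S * E * S⁻¹) * (S * F * S⁻¹) = S * (E * F) * S⁻¹ := by
    intro E F
    calc (S * E * S⁻¹) * (S * F * S⁻¹) = S * E * (S⁻¹ * S) * (F * S⁻¹) := by noncomm_ring
      _ = S * (E * F) * S⁻¹ := by rw [hS2]; noncomm_ring
  set Ψ : (Fin n → ℂ) → Matrix (Fin n) (Fin n) ℂ := fun e => φ (S * diagonal e * S⁻¹) with hΨ
  have hmemA : ∀ e : Fin n → ℂ, S * diagonal e * S⁻¹ ∈ A :=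
    fun e => hmulA _ (hmulA _ hS _ (hdiagA e)) _ hSinv
  have hcommute : ∀ e e' : Fin n → ℂ, Ψ e * Ψ e' = Ψ e' * Ψ e := by
    intro e e'
    apply hcomm _ (hmemA e) _ (hmemA e')
    rw [hconjmulS, hconjmulS, Matrix.diagonal_mul_diagonal, Matrix.diagonal_mul_diagonal]
    have : (fun i => e i * e' i) = fun i => e' i * e i := by
      funext i
      exact mul_comm _ _
    rw [this]
  have hspecΨ : ∀ e : Fin n → ℂ, spectrum ℂ (Ψ e) = Set.range e := by
    intro e
    rw [hΨ]
    rw [hspec _ (hmemA e)]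
    have h1 : S = (hSu.unit : Matrix (Fin n) (Fin n) ℂ) := (IsUnit.unit_spec hSu).symm
    rw [h1, ← Matrix.coe_units_inv, spectrum.units_conjugate, spectrum_diagonal]
  have hcontΨ : Continuous Ψ := by
    apply hcont.comp_continuous
    · exact (continuous_const.matrix_mul (Continuous.matrix_diagonal continuous_id)).matrix_mul
        continuous_const
    · exact hmemA
  -- distinguished diagonal
  set d0 : Fin n → ℂ := fun i => ((i : ℕ) : ℂ) with hd0
  have hd0inj : Function.Injective d0 := by
    intro a b h
    simp only [hd0, Nat.cast_inj] at h
    exact Fin.val_injective h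
  set M0 : Matrix (Fin n) (Fin n) ℂ := Ψ d0 with hM0def
  have hchar : M0.charpoly = Lagrange.nodal Finset.univ d0 :=
    stmt14_charpoly_eq_nodal M0 d0 hd0inj (hspecΨ d0)
  have hnodal0 : Polynomial.aeval M0 (Lagrange.nodal Finset.univ d0) = 0 := by
    rw [← hchar]
    exact Matrix.aeval_self_charpoly M0
  set P : Fin n → Matrix (Fin n) (Fin n) ℂ :=
    fun i => Polynomial.aeval M0 (Lagrange.basis Finset.univ d0 i) with hPdef
  have hinjOn : Set.InjOn d0 ↑(Finset.univ : Finset (Fin n)) := Function.Injective.injOn hd0inj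
  have hPsum : ∑ i, P i = 1 := by
    rw [hPdef, ← map_sum, Lagrange.sum_basis hinjOn Finset.univ_nonempty, _root_.map_one]
  have hPmul : ∀ i j : Fin n, i ≠ j → P i * P j = 0 := by
    intro i j hij
    obtain ⟨q, hq⟩ := stmt14_nodal_dvd_mul_basis d0 hij
    rw [hPdef, ← _root_.map_mul, hq, _root_.map_mul, hnodal0, zero_mul]
  have hPidem : ∀ i, P i * P i = P i := by
    intro i
    have h1 : ∑ j, P i * P j = P i := by rw [← Finset.mul_sum, hPsum, mul_one]
    have h2 : ∑ j, P i * P j = P i * P i := Finset.sum_eq_single_of_mem i (Finset.mem_univ i)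
      (fun j _ hj => hPmul i j (Ne.symm hj))
    rw [← h2, h1]
  have hMP : ∀ i, M0 * P i = d0 i • P i := by
    intro i
    obtain ⟨q, hq⟩ := stmt14_nodal_dvd_X_sub_C_mul_basis d0 i
    have h0 := congrArg (Polynomial.aeval M0) hq
    rw [_root_.map_mul, _root_.map_mul, map_sub, Polynomial.aeval_X, Polynomial.aeval_C, hnodal0,
      zero_mul] at h0
    have h1 : (M0 - algebraMap ℂ (Matrix (Fin n) (Fin n) ℂ) (d0 i)) * P i = 0 := h0
    rw [sub_mul] at h1
    have h2 : M0 * P i = algebraMap ℂ (Matrix (Fin n) (Fin n) ℂ) (d0 i) * P i :=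
      sub_eq_zero.mp h1
    rw [h2, Algebra.algebraMap_eq_smul_one, smul_mul_assoc, one_mul]
  have hPne : ∀ i, P i ≠ 0 := by
    intro i h0
    have h1 : Polynomial.eval (d0 i) (Lagrange.basis Finset.univ d0 i) = 1 :=
      Lagrange.eval_basis_self hinjOn (Finset.mem_univ i)
    have hmem : d0 i ∈ spectrum ℂ M0 := by
      rw [hM0def, hspecΨ d0]
      exact ⟨i, rfl⟩
    have h2 := spectrum.subset_polynomial_aeval M0 (Lagrange.basis Finset.univ d0 i)
      ⟨d0 i, hmem, rfl⟩
    have h3 : ((Polynomial.aeval M0) (Lagrange.basis Finset.univ d0 i)) = 0 := h0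
    rw [h3, spectrum.zero_eq] at h2
    simp only [h1] at h2
    exact one_ne_zero (Set.mem_singleton_iff.mp h2)
  -- eigenvectors
  have hxex : ∀ i, ∃ x : Fin n → ℂ, P i *ᵥ x ≠ 0 := by
    intro i
    by_contra h
    push_neg at h
    apply hPne i
    ext k l
    have := congrFun (h (Pi.single l 1)) k
    rw [Matrix.mulVec_single] at this
    simpa using this
  choose x hx using hxex
  set v : Fin n → (Fin n → ℂ) := fun i => P i *ᵥ x i with hv
  have hvP : ∀ i j : Fin n, P j *ᵥ v i = if j = i then v i else 0 := by
    intro i j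
    rw [hv]
    rw [Matrix.mulVec_mulVec]
    by_cases hji : j = i
    · subst hji
      rw [hPidem j, if_pos rfl]
    · rw [hPmul j i hji, if_neg hji, Matrix.zero_mulVec]
  have hvne : ∀ i, v i ≠ 0 := fun i => hx i
  set T : Matrix (Fin n) (Fin n) ℂ := Matrix.of (fun k i => v i k) with hT
  have hPT : ∀ i, P i * T = T * diagonal (Pi.single i 1) := by
    intro i
    ext k j
    rw [Matrix.mul_diagonal]
    have hL : (P i * T) k j = (P i *ᵥ v j) k := by
      rw [Matrix.mul_apply, Matrix.mulVec, dotProduct]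
      rfl
    rw [hL, hvP j i]
    by_cases hij : i = j
    · subst hij
      rw [if_pos rfl, Pi.single_eq_same, mul_one]
      rfl
    · rw [if_neg hij, Pi.single_eq_of_ne (Ne.symm hij), mul_zero]
      rfl
  have hTunit : IsUnit T := by
    rw [Matrix.isUnit_iff_isUnit_det, isUnit_iff_ne_zero]
    intro hdet0
    obtain ⟨c, hc0, hc⟩ := (Matrix.exists_mulVec_eq_zero_iff).mpr hdet0
    apply hc0
    funext j
    have h1 : P j *ᵥ (T *ᵥ c) = 0 := by rw [hc, Matrix.mulVec_zero]
    rw [Matrix.mulVec_mulVec, hPT j, ← Matrix.mulVec_mulVec] at h1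
    have h2 : (diagonal (Pi.single j 1) : Matrix (Fin n) (Fin n) ℂ) *ᵥ c
        = Pi.single j (c j) := by
      ext k
      rw [Matrix.mulVec_diagonal]
      by_cases hkj : k = j
      · subst hkj
        rw [Pi.single_eq_same, Pi.single_eq_same, one_mul]
      · rw [Pi.single_eq_of_ne hkj, Pi.single_eq_of_ne hkj, zero_mul]
    rw [h2] at h1
    have h3 : T *ᵥ Pi.single j (c j) = fun k => T k j * c j := Matrix.mulVec_single T j (c j)
    rw [h3] at h1
    by_contra hcj
    apply hvne j
    funext k
    have := congrFun h1 k
    have hTkj : T k j = v j k := rfl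
    rw [hTkj] at this
    rcases mul_eq_zero.mp this with h | h
    · exact h
    · exact absurd h hcj
  have hT1 : T * T⁻¹ = 1 := Matrix.mul_nonsing_inv T ((Matrix.isUnit_iff_isUnit_det T).mp hTunit)
  have hT2 : T⁻¹ * T = 1 := Matrix.nonsing_inv_mul T ((Matrix.isUnit_iff_isUnit_det T).mp hTunit)
  have hPdiagT : ∀ i, P i = T * diagonal (Pi.single i 1) * T⁻¹ := by
    intro i
    calc P i = P i * (T * T⁻¹) := by rw [hT1, mul_one]
      _ = (P i * T) * T⁻¹ := by rw [Matrix.mul_assoc]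
      _ = T * diagonal (Pi.single i 1) * T⁻¹ := by rw [hPT i]
  have hconjmulT : ∀ E F : Matrix (Fin n) (Fin n) ℂ,
      (T⁻¹ * E * T) * (T⁻¹ * F * T) = T⁻¹ * (E * F) * T := by
    intro E F
    calc (T⁻¹ * E * T) * (T⁻¹ * F * T) = T⁻¹ * E * (T * T⁻¹) * (F * T) := by noncomm_ring
      _ = T⁻¹ * (E * F) * T := by rw [hT1]; noncomm_ring
  have hEi : ∀ i, T⁻¹ * P i * T = diagonal (Pi.single i 1) := by
    intro i
    rw [hPdiagT i]
    calc T⁻¹ * (T * diagonal (Pi.single i 1) * T⁻¹) * T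
        = (T⁻¹ * T) * diagonal (Pi.single i 1) * (T⁻¹ * T) := by noncomm_ring
      _ = diagonal (Pi.single i 1) := by rw [hT2]; noncomm_ring
  have hcommP : ∀ (e : Fin n → ℂ) (i : Fin n), Commute (Ψ e) (P i) := by
    intro e i
    exact stmt14_commute_aeval (hcommute e d0) _
  set f : (Fin n → ℂ) → (Fin n → ℂ) := fun e i => (T⁻¹ * Ψ e * T) i i with hf
  have hBdiag : ∀ e, T⁻¹ * Ψ e * T = diagonal (f e) := by
    intro e
    have := stmt14_eq_diagonal_of_commute_single (B := T⁻¹ * Ψ e * T) ?_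
    · exact this
    · intro i
      rw [← hEi i]
      calc (T⁻¹ * Ψ e * T) * (T⁻¹ * P i * T) = T⁻¹ * (Ψ e * P i) * T := hconjmulT _ _
        _ = T⁻¹ * (P i * Ψ e) * T := by rw [hcommP e i]
        _ = (T⁻¹ * P i * T) * (T⁻¹ * Ψ e * T) := (hconjmulT _ _).symm
  have hΨf : ∀ e, Ψ e = T * diagonal (f e) * T⁻¹ := by
    intro e
    rw [← hBdiag e]
    calc Ψ e = (T * T⁻¹) * Ψ e * (T * T⁻¹) := by rw [hT1]; noncomm_ring
      _ = T * (T⁻¹ * Ψ e * T) * T⁻¹ := by noncomm_ring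
  have hrangef : ∀ e, Set.range (f e) = Set.range e := by
    intro e
    rw [← spectrum_diagonal (R := ℂ) (f e), ← hspecΨ e, hΨf e]
    have h1 : T = (hTunit.unit : Matrix (Fin n) (Fin n) ℂ) := (IsUnit.unit_spec hTunit).symm
    rw [h1, ← Matrix.coe_units_inv, spectrum.units_conjugate]
  have hcontf : Continuous f := by
    apply continuous_pi
    intro i
    exact ((continuous_const.matrix_mul hcontΨ).matrix_mul continuous_const).matrix_elem i i
  have hM0T : T⁻¹ * M0 * T = diagonal d0 := by
    have hsum : M0 = ∑ i, d0 i • P i := by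
      calc M0 = M0 * ∑ i, P i := by rw [hPsum, mul_one]
        _ = ∑ i, M0 * P i := Finset.mul_sum _ _ _
        _ = ∑ i, d0 i • P i := by
            apply Finset.sum_congr rfl
            intro i _
            exact hMP i
    rw [hsum, Finset.mul_sum, Finset.sum_mul]
    calc ∑ i, (T⁻¹ * (d0 i • P i)) * T = ∑ i, d0 i • (T⁻¹ * P i * T) := by
          apply Finset.sum_congr rfl
          intro i _
          rw [mul_smul_comm, smul_mul_assoc]
      _ = ∑ i, d0 i • (diagonal (Pi.single i 1) : Matrix (Fin n) (Fin n) ℂ) := by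
          apply Finset.sum_congr rfl
          intro i _
          rw [hEi i]
      _ = diagonal d0 := stmt14_sum_smul_single_diagonal d0
  have hf0 : f d0 = d0 := by
    funext i
    rw [hf]
    show (T⁻¹ * Ψ d0 * T) i i = d0 i
    rw [← hM0def, hM0T, Matrix.diagonal_apply_eq]
  have hkey : ∀ e, f e = e := stmt14_key_id hcontf hrangef hd0inj hf0
  refine ⟨T, hTunit, fun d => ?_⟩
  have : φ (S * diagonal d * S⁻¹) = Ψ d := rfl
  rw [this, hΨf d, hkey d]
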